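/- Let C be a centralic category. Every internal unitary magma structure ρ_X : X × X → X on an object X of C is commutative and associative: ρ_X ∘ ⟨π₂, π₁⟩ = ρ_X (where π₁, π₂ : X × X → X are the projections), and ρ_X ∘ (ρ_X × 1_X) = ρ_X ∘ (1_X × ρ_X) ∘ α where α : (X × X) × X ≅ X × (X × X) is the canonical associativity isomorphism. Hence every commutative object of C is the underlying object of a (necessarily unique) internal commutative monoid. -/

import Mathlib

open CategoryTheory CategoryTheory.Limits

universe v u

/-- A pointed category with binary products is *centralic*. -/
def Centralic (C : Type u) [Category.{v} C] [HasZeroObject C] [HasZeroMorphisms C]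
    [HasBinaryProducts C] : Prop :=
  ∀ ⦃X Y Z S : C⦄ (f : X ⨯ Y ⟶ Z) (x x' : S ⟶ X) (y : S ⟶ Y),
    prod.lift x 0 ≫ f = prod.lift x' 0 ≫ f →
    prod.lift x y ≫ f = prod.lift x' y ≫ f

/-- `ρ : A ⨯ B ⟶ X` is a cooperator for `f : A ⟶ X` and `g : B ⟶ X`. -/
def IsCooperator {C : Type u} [Category.{v} C] [HasZeroObject C] [HasZeroMorphisms C]
    [HasBinaryProducts C] {A B X : C} (f : A ⟶ X) (g : B ⟶ X) (ρ : A ⨯ B ⟶ X) : Prop :=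
  prod.lift (𝟙 A) 0 ≫ ρ = f ∧ prod.lift 0 (𝟙 B) ≫ ρ = g

/-- Two morphisms with common codomain commute if they admit a cooperator. -/
def Commutes {C : Type u} [Category.{v} C] [HasZeroObject C] [HasZeroMorphisms C]
    [HasBinaryProducts C] {A B X : C} (f : A ⟶ X) (g : B ⟶ X) : Prop :=
  ∃ ρ : A ⨯ B ⟶ X, IsCooperator f g ρ

/-- A morphism `f : A ⟶ B` is central if it commutes with `𝟙 B`. -/
def Central {C : Type u} [Category.{v} C] [HasZeroObject C] [HasZeroMorphisms C]
    [HasBinaryProducts C] {A B : C} (f : A ⟶ B) : Prop :=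
  Commutes f (𝟙 B)

set_option linter.unusedSectionVars false

section Aux
variable {C : Type u} [Category.{v} C] [HasZeroObject C] [HasZeroMorphisms C]
    [HasBinaryProducts C]

lemma unitL' {X : C} {ρ : X ⨯ X ⟶ X} (h₁ : prod.lift (𝟙 X) 0 ≫ ρ = 𝟙 X)
    {S : C} (u : S ⟶ X) : prod.lift u 0 ≫ ρ = u := by
  have h : prod.lift u (0 : S ⟶ X) = u ≫ prod.lift (𝟙 X) 0 := by
    apply Limits.prod.hom_ext <;> simp
  rw [h, Category.assoc, h₁, Category.comp_id]

lemma unitR' {X : C} {ρ : X ⨯ X ⟶ X} (h₂ : prod.lift 0 (𝟙 X) ≫ ρ = 𝟙 X)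
    {S : C} (u : S ⟶ X) : prod.lift 0 u ≫ ρ = u := by
  have h : prod.lift (0 : S ⟶ X) u = u ≫ prod.lift 0 (𝟙 X) := by
    apply Limits.prod.hom_ext <;> simp
  rw [h, Category.assoc, h₂, Category.comp_id]

/-- `f(⟨a,c⟩,b) = ρ₂(ρ₁(a,b),c)` evaluated on generalized elements. -/
lemma keyf' {X S : C} (ρ₁ ρ₂ : X ⨯ X ⟶ X) (a c b : S ⟶ X) :
    prod.lift (prod.lift a c) b ≫
      (prod.lift (prod.lift (prod.fst ≫ prod.fst) prod.snd ≫ ρ₁) (prod.fst ≫ prod.snd) ≫ ρ₂)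
    = prod.lift (prod.lift a b ≫ ρ₁) c ≫ ρ₂ := by
  have hin : prod.lift (prod.lift a c) b ≫ prod.lift (prod.fst ≫ prod.fst) prod.snd
      = prod.lift a b := by
    apply Limits.prod.hom_ext <;> simp [prod.lift_fst, prod.lift_snd, prod.lift_fst_assoc, prod.lift_snd_assoc]
  rw [← Category.assoc]
  congr 1
  apply Limits.prod.hom_ext
  · rw [Category.assoc, prod.lift_fst, ← Category.assoc, hin, prod.lift_fst]
  · simp [prod.lift_fst, prod.lift_snd, prod.lift_fst_assoc, prod.lift_snd_assoc]

lemma lift_zero_zero {X S : C} : prod.lift (0 : S ⟶ X) (0 : S ⟶ X) = 0 := by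
  apply Limits.prod.hom_ext <;> simp [prod.lift_fst, prod.lift_snd, prod.lift_fst_assoc, prod.lift_snd_assoc]

end Aux

section Main
variable {C : Type u} [Category.{v} C] [HasZeroObject C] [HasZeroMorphisms C]
    [HasBinaryProducts C]

set_option linter.unusedSectionVars false

lemma magma_comm' (hC : Centralic C) {X : C} (ρ : X ⨯ X ⟶ X)
    (h₁ : prod.lift (𝟙 X) 0 ≫ ρ = 𝟙 X) (h₂ : prod.lift 0 (𝟙 X) ≫ ρ = 𝟙 X) :
    prod.lift prod.snd prod.fst ≫ ρ = ρ := by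
  have key := hC
    (prod.lift (prod.lift (prod.fst ≫ prod.fst) prod.snd ≫ ρ) (prod.fst ≫ prod.snd) ≫ ρ)
    (prod.lift prod.fst 0) (prod.lift 0 prod.fst) (prod.snd : X ⨯ X ⟶ X) ?_
  · rw [keyf' ρ ρ, keyf' ρ ρ, prod.lift_fst_snd, Category.id_comp,
        unitL' h₁ ρ, unitR' h₂ prod.snd] at key
    exact key.symm
  · rw [keyf' ρ ρ, keyf' ρ ρ, unitL' h₁ prod.fst, unitL' h₁ prod.fst,
        lift_zero_zero, zero_comp, unitR' h₂ prod.fst]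

lemma comm_elt' (hC : Centralic C) {X : C} (ρ : X ⨯ X ⟶ X)
    (h₁ : prod.lift (𝟙 X) 0 ≫ ρ = 𝟙 X) (h₂ : prod.lift 0 (𝟙 X) ≫ ρ = 𝟙 X)
    {S : C} (x y : S ⟶ X) :
    prod.lift x y ≫ ρ = prod.lift y x ≫ ρ := by
  have h := magma_comm' hC ρ h₁ h₂
  have hl : prod.lift y x ≫ prod.lift prod.snd prod.fst = prod.lift x y := by
    apply Limits.prod.hom_ext <;> simp [prod.lift_fst, prod.lift_snd, prod.lift_fst_assoc, prod.lift_snd_assoc]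
  conv_rhs => rw [← h]
  rw [← Category.assoc, hl]

/-- The law ρ(ρ(x,y),z) = ρ(y,ρ(x,z)). -/
lemma lawL' (hC : Centralic C) {X : C} (ρ : X ⨯ X ⟶ X)
    (h₁ : prod.lift (𝟙 X) 0 ≫ ρ = 𝟙 X) (h₂ : prod.lift 0 (𝟙 X) ≫ ρ = 𝟙 X)
    {S : C} (x y z : S ⟶ X) :
    prod.lift (prod.lift x y ≫ ρ) z ≫ ρ = prod.lift y (prod.lift x z ≫ ρ) ≫ ρ := by
  have key := hC
    (prod.lift (prod.lift (prod.fst ≫ prod.fst) prod.snd ≫ ρ) (prod.fst ≫ prod.snd) ≫ ρ)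
    (prod.lift x z) (prod.lift 0 (prod.lift x z ≫ ρ)) y ?_
  · rw [keyf' ρ ρ, keyf' ρ ρ, unitR' h₂ y] at key
    exact key
  · rw [keyf' ρ ρ, keyf' ρ ρ, unitL' h₁ x, lift_zero_zero, zero_comp,
        unitR' h₂ (prod.lift x z ≫ ρ)]

end Main


/-- Every internal unitary magma structure in a centralic category is commutative,
associative, and unique; hence every commutative object underlies a (necessarily
unique) internal commutative monoid. -/
theorem stmt17 (C : Type u) [Category.{v} C] [HasZeroObject C] [HasZeroMorphisms C]
    [HasBinaryProducts C] (hC : Centralic C)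
    {X : C} (ρX : X ⨯ X ⟶ X)
    (h₁ : prod.lift (𝟙 X) 0 ≫ ρX = 𝟙 X) (h₂ : prod.lift 0 (𝟙 X) ≫ ρX = 𝟙 X) :
    -- commutativity
    (prod.lift prod.snd prod.fst ≫ ρX = ρX) ∧
    -- associativity
    (prod.map ρX (𝟙 X) ≫ ρX =
      (prod.associator X X X).hom ≫ prod.map (𝟙 X) ρX ≫ ρX) ∧
    -- uniqueness of the structure
    (∀ ρ' : X ⨯ X ⟶ X,
      prod.lift (𝟙 X) 0 ≫ ρ' = 𝟙 X → prod.lift 0 (𝟙 X) ≫ ρ' = 𝟙 X → ρ' = ρX) := by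
  refine ⟨magma_comm' hC ρX h₁ h₂, ?_, ?_⟩
  · -- associativity
    set x : (X ⨯ X) ⨯ X ⟶ X := prod.fst ≫ prod.fst with hx
    set y : (X ⨯ X) ⨯ X ⟶ X := prod.fst ≫ prod.snd with hy
    set z : (X ⨯ X) ⨯ X ⟶ X := prod.snd with hz
    have e1 : prod.map ρX (𝟙 X) ≫ ρX = prod.lift (prod.lift x y ≫ ρX) z ≫ ρX := by
      congr 1
      apply Limits.prod.hom_ext
      · rw [hx, hy, ← prod.comp_lift, prod.lift_fst_snd, Category.comp_id]
        simp [prod.lift_fst, prod.lift_snd, prod.lift_fst_assoc, prod.lift_snd_assoc]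
      · simp [hz, prod.lift_fst, prod.lift_snd, prod.lift_fst_assoc, prod.lift_snd_assoc]
    have e2 : (prod.associator X X X).hom ≫ prod.map (𝟙 X) ρX ≫ ρX
        = prod.lift x (prod.lift y z ≫ ρX) ≫ ρX := by
      rw [← Category.assoc]
      congr 1
      apply Limits.prod.hom_ext
      · simp [hx, prod.lift_fst, prod.lift_snd, prod.lift_fst_assoc, prod.lift_snd_assoc]
      · simp [hy, hz, prod.lift_fst, prod.lift_snd, prod.lift_fst_assoc, prod.lift_snd_assoc]
    rw [e1, e2, comm_elt' hC ρX h₁ h₂ x y, lawL' hC ρX h₁ h₂ y x z]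
  · -- uniqueness
    intro ρ' h₁' h₂'
    have key := hC
      (prod.lift (prod.lift (prod.fst ≫ prod.fst) prod.snd ≫ ρX) (prod.fst ≫ prod.snd) ≫ ρ')
      (prod.lift prod.fst 0) (prod.lift 0 prod.fst) (prod.snd : X ⨯ X ⟶ X) ?_
    · rw [keyf' ρX ρ', keyf' ρX ρ', prod.lift_fst_snd, Category.id_comp,
          unitL' h₁' ρX, unitR' h₂ prod.snd] at key
      rw [key, comm_elt' hC ρ' h₁' h₂' prod.snd prod.fst, prod.lift_fst_snd,
          Category.id_comp]
    · rw [keyf' ρX ρ', keyf' ρX ρ', unitL' h₁ prod.fst, unitL' h₁' prod.fst,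
          lift_zero_zero, zero_comp, unitR' h₂' prod.fst]
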